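/- The only c-conjugate tuple of the form (f, f, ..., f) (N copies) is f = (N-1)·q where q(x) = ½‖x‖²; that is, if f: H → ℝ ∪ {+∞} is proper and satisfies f(x) = sup_{x₂,...,x_N} [ Σ_{1≤i<j≤N}⟨x_i, x_j⟩ - Σ_{i=2}^N f(x_i) ] (with x₁ = x) for all x ∈ H, then f = (N-1)q. -/

import Mathlib

open scoped RealInnerProductSpace BigOperators

noncomputable section

variable {H : Type*} [NormedAddCommGroup H] [InnerProductSpace ℝ H] [CompleteSpace H]

/-- The multi-marginal cost `c(x₁,...,x_N) = ∑_{i<j} ⟪x_i, x_j⟫`. -/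
def cost {N : ℕ} (x : Fin N → H) : ℝ :=
  ∑ i : Fin N, ∑ j : Fin N, if i < j then ⟪x i, x j⟫ else 0

/-- `q(x) = ½‖x‖²`. -/
def q (x : H) : ℝ := (1 / 2) * ‖x‖ ^ 2

lemma ereal_coe_sum {ι : Type*} (s : Finset ι) (g : ι → ℝ) :
    ((∑ i ∈ s, g i : ℝ) : EReal) = ∑ i ∈ s, ((g i : ℝ) : EReal) := by
  induction s using Finset.cons_induction with
  | empty => simp
  | cons a s ha ih => simp [Finset.sum_cons, EReal.coe_add, ih]

lemma counting {N : ℕ} (g : Fin N → ℝ) :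
    ∑ i : Fin N, ∑ j : Fin N, (if i < j then g i + g j else 0)
      = ((N : ℝ) - 1) * ∑ i : Fin N, g i := by
  have h1 : ∑ i : Fin N, ∑ j : Fin N, (if i < j then g i + g j else 0)
      = ∑ i : Fin N, ∑ j : Fin N, ((if i < j then g i else 0) + (if j < i then g i else 0)) := by
    rw [show (∑ i : Fin N, ∑ j : Fin N, ((if i < j then g i else 0) + (if j < i then g i else 0)))
        = (∑ i : Fin N, ∑ j : Fin N, (if i < j then g i else 0))
          + (∑ i : Fin N, ∑ j : Fin N, (if j < i then g i else 0)) by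
      rw [← Finset.sum_add_distrib]; congr 1; ext i; rw [Finset.sum_add_distrib]]
    rw [Finset.sum_comm (f := fun i j => if j < i then g i else 0)]
    rw [← Finset.sum_add_distrib]
    congr 1; ext i; rw [← Finset.sum_add_distrib]
    congr 1; ext j
    by_cases h : i < j
    · simp [h, not_lt.mpr h.le]
    · by_cases h2 : j < i
      · simp [h, h2]
      · simp [h, h2]
  rw [h1]
  have h2 : ∀ i : Fin N, ∑ j : Fin N, ((if i < j then g i else 0) + (if j < i then g i else 0))
      = ∑ j : Fin N, (if i ≠ j then g i else 0) := by
    intro i; congr 1; ext j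
    rcases lt_trichotomy i j with h | h | h
    · simp [h, not_lt.mpr h.le, h.ne]
    · simp [h]
    · simp [h, not_lt.mpr h.le, h.ne']
  simp_rw [h2]
  have h3 : ∀ i : Fin N, ∑ j : Fin N, (if i ≠ j then g i else 0) = ((N : ℝ) - 1) * g i := by
    intro i
    have h : ∀ j, (if i ≠ j then g i else 0) = g i - (if i = j then g i else 0) := by
      intro j; by_cases h : i = j <;> simp [h]
    simp_rw [h, Finset.sum_sub_distrib, Finset.sum_const, Finset.sum_ite_eq, Finset.mem_univ,
      if_true, Finset.card_univ, Fintype.card_fin, nsmul_eq_mul]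
    ring
  simp_rw [h3, ← Finset.mul_sum]

lemma cost_le_sum_q {N : ℕ} (x : Fin N → H) :
    cost x ≤ ((N : ℝ) - 1) * ∑ i : Fin N, q (x i) := by
  rw [← counting (fun i => q (x i))]
  unfold cost
  refine Finset.sum_le_sum fun i _ => Finset.sum_le_sum fun j _ => ?_
  by_cases h : i < j
  · simp only [h, if_true]
    have h1 := real_inner_le_norm (x i) (x j)
    have h2 : (0:ℝ) ≤ (‖x i‖ - ‖x j‖) ^ 2 := sq_nonneg _
    unfold q; nlinarith
  · simp [h]

/-- The only `c`-conjugate tuple of the form `(f,...,f)` is `f = (N-1)·q`. -/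
theorem self_c_conjugate_is_multiple_of_q {N : ℕ} (hN : 2 ≤ N) (f : H → EReal)
    (hproper : (∃ x, f x ≠ ⊤) ∧ ∀ x, f x ≠ ⊥)
    (hconj : ∀ a : H,
      f a = ⨆ x : {x : Fin N → H // x ⟨0, by omega⟩ = a},
        ((cost (x : Fin N → H) : ℝ) : EReal)
          - ∑ i ∈ Finset.univ.erase (⟨0, by omega⟩ : Fin N), f ((x : Fin N → H) i)) :
    ∀ a : H, f a = ((((N : ℝ) - 1) * q a : ℝ) : EReal) := by
  have hN' : (2:ℝ) ≤ (N:ℝ) := by exact_mod_cast hN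
  have i0 : Fin N := ⟨0, by omega⟩
  have hcard : (Finset.univ.erase (⟨0, by omega⟩ : Fin N)).card = N - 1 := by
    rw [Finset.card_erase_of_mem (Finset.mem_univ _), Finset.card_univ, Fintype.card_fin]
  -- lower bound
  have hlow : ∀ a : H, ((((N : ℝ) - 1) * q a : ℝ) : EReal) ≤ f a := by
    intro a
    by_cases htop : f a = ⊤
    · rw [htop]; exact le_top
    · set r : ℝ := (f a).toReal with hr
      have hfa : f a = (r : EReal) := (EReal.coe_toReal htop (hproper.2 a)).symm
      have hle : ((cost (fun _ : Fin N => a) : ℝ) : EReal)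
          - ∑ i ∈ Finset.univ.erase (⟨0, by omega⟩ : Fin N), f ((fun _ : Fin N => a) i)
          ≤ f a := by
        rw [hconj a]
        exact le_iSup (fun x : {x : Fin N → H // x ⟨0, by omega⟩ = a} =>
          ((cost (x : Fin N → H) : ℝ) : EReal)
            - ∑ i ∈ Finset.univ.erase (⟨0, by omega⟩ : Fin N), f ((x : Fin N → H) i))
          ⟨fun _ => a, rfl⟩
      have hsum : (∑ i ∈ Finset.univ.erase (⟨0, by omega⟩ : Fin N),
          f ((fun _ : Fin N => a) i)) = ((((N:ℝ) - 1) * r : ℝ) : EReal) := by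
        simp only [hfa]
        rw [← ereal_coe_sum]
        congr 1
        rw [Finset.sum_const, hcard, nsmul_eq_mul]
        congr 1
        rw [Nat.cast_sub (by omega)]; simp
      have hcost : cost (fun _ : Fin N => a) = ((N:ℝ) - 1) * ((N:ℝ) * q a) := by
        have : cost (fun _ : Fin N => a)
            = ∑ i : Fin N, ∑ j : Fin N, (if i < j then q a + q a else 0) := by
          unfold cost
          congr 1; ext i; congr 1; ext j
          congr 1
          rw [real_inner_self_eq_norm_sq]
          unfold q; ring
        rw [this, counting (fun _ => q a), Finset.sum_const, Finset.card_univ,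
          Fintype.card_fin, nsmul_eq_mul]
      rw [hsum, hfa, ← EReal.coe_sub, EReal.coe_le_coe_iff] at hle
      rw [hfa, EReal.coe_le_coe_iff]
      rw [hcost] at hle
      nlinarith [hle]
  intro a
  refine le_antisymm ?_ (hlow a)
  rw [hconj a]
  refine iSup_le ?_
  rintro ⟨x, hx⟩
  have hsum : ((∑ i ∈ Finset.univ.erase (⟨0, by omega⟩ : Fin N),
      (((N:ℝ) - 1) * q (x i)) : ℝ) : EReal)
      ≤ ∑ i ∈ Finset.univ.erase (⟨0, by omega⟩ : Fin N), f (x i) := by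
    rw [ereal_coe_sum]
    exact Finset.sum_le_sum fun i _ => hlow (x i)
  calc ((cost x : ℝ) : EReal) - ∑ i ∈ Finset.univ.erase (⟨0, by omega⟩ : Fin N), f (x i)
      ≤ ((cost x : ℝ) : EReal)
        - ((∑ i ∈ Finset.univ.erase (⟨0, by omega⟩ : Fin N),
            (((N:ℝ) - 1) * q (x i)) : ℝ) : EReal) := EReal.sub_le_sub le_rfl hsum
    _ = ((cost x - ∑ i ∈ Finset.univ.erase (⟨0, by omega⟩ : Fin N),
            (((N:ℝ) - 1) * q (x i)) : ℝ) : EReal) := (EReal.coe_sub _ _).symm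
    _ ≤ ((((N : ℝ) - 1) * q a : ℝ) : EReal) := by
        rw [EReal.coe_le_coe_iff]
        have h1 := cost_le_sum_q x
        have h2 : ∑ i : Fin N, (((N:ℝ) - 1) * q (x i))
            = ((N:ℝ) - 1) * q (x ⟨0, by omega⟩)
              + ∑ i ∈ Finset.univ.erase (⟨0, by omega⟩ : Fin N), (((N:ℝ) - 1) * q (x i)) :=
          (Finset.add_sum_erase _ (fun i => ((N:ℝ) - 1) * q (x i)) (Finset.mem_univ _)).symm
        rw [hx] at h2
        rw [Finset.mul_sum] at h1
        linarith [h1, h2]
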